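/- arXiv:2510.03179 — 5 statements merged into one kernel-verified Lean document; each statement's English description precedes it below -/
import Mathlib

section
/- Let N be a positive integer, let Λ be the set of positive divisors of N, and let f : Λ → A be a function into an additive abelian group A. Define f₊(n) = ∑_{d ∣ n} f(d) and f⁺(n) = ∑_{d ∈ Λ, n ∣ d} f(d). Then for every n ∈ Λ, f⁺(n) = ∑_{ρ ⊆ π(n)} (−1)^{|ρ|} f₊(n(ρ)), where π(n) is the set of prime divisors of n, n̲ = n / ∏_{p ∈ π(n)} p, and n(ρ) = n̲_ρ · N_{ρ'} (i.e., n(ρ) has p-adic valuation v_p(n)−1 for p ∈ ρ and v_p(N) for primes p ∉ ρ). -/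
/-- `nrho N n ρ` is the integer with `q`-adic valuation `v_q(n) - 1` for `q ∈ ρ`
and `v_q(N)` for primes `q ∉ ρ` (where `ρ` is a set of primes dividing `n`). -/
def nrho (N n : ℕ) (ρ : Finset ℕ) : ℕ :=
  ∏ p ∈ N.primeFactors, p ^ (if p ∈ ρ then n.factorization p - 1 else N.factorization p)

theorem stmt_0 {A : Type*} [AddCommGroup A] (N : ℕ) (hN : 0 < N) (f : ℕ → A)
    (n : ℕ) (hn0 : 0 < n) (hn : n ∣ N) :
    (∑ d ∈ N.divisors.filter (fun d => n ∣ d), f d) =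
      ∑ ρ ∈ n.primeFactors.powerset,
        (-1 : ℤ) ^ ρ.card • ∑ d ∈ (nrho N n ρ).divisors, f d := by
  classical
  have hNne : N ≠ 0 := hN.ne'
  have hnN : n.factorization ≤ N.factorization :=
    (Nat.factorization_le_iff_dvd hn0.ne' hNne).2 hn
  -- factorization of nrho
  have hfact : ∀ ρ : Finset ℕ, ∀ q : ℕ,
      (nrho N n ρ).factorization q =
        if q ∈ N.primeFactors then
          (if q ∈ ρ then n.factorization q - 1 else N.factorization q) else 0 := by
    intro ρ q
    unfold nrho
    rw [Nat.factorization_prod (fun p hp =>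
      pow_ne_zero _ (Nat.prime_of_mem_primeFactors hp).pos.ne')]
    rw [Finset.sum_apply']
    rw [Finset.sum_congr rfl (fun p hp => ?_), Finset.sum_ite_eq' N.primeFactors q
      (fun p => if p ∈ ρ then n.factorization p - 1 else N.factorization p)]
    rw [Nat.Prime.factorization_pow (Nat.prime_of_mem_primeFactors hp), Finsupp.single_apply]
  have hpos : ∀ ρ : Finset ℕ, nrho N n ρ ≠ 0 := by
    intro ρ
    exact Finset.prod_ne_zero_iff.2 fun p hp =>
      pow_ne_zero _ (Nat.prime_of_mem_primeFactors hp).pos.ne'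
  have hdvdN : ∀ ρ : Finset ℕ, nrho N n ρ ∣ N := by
    intro ρ
    rw [← Nat.factorization_le_iff_dvd (hpos ρ) hNne]
    intro q
    rw [hfact]
    split_ifs with h1 h2
    · exact le_trans (Nat.sub_le _ _) (hnN q)
    · exact le_refl _
    · exact Nat.zero_le _
  -- rewrite inner divisor sums as sums over N.divisors
  have hinner : ∀ ρ : Finset ℕ, (∑ d ∈ (nrho N n ρ).divisors, f d) =
      ∑ d ∈ N.divisors, if d ∣ nrho N n ρ then f d else 0 := by
    intro ρ
    rw [← Finset.sum_filter, Nat.divisors_filter_dvd_of_dvd hNne (hdvdN ρ)]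
  simp_rw [hinner, Finset.smul_sum]
  rw [Finset.sum_comm]
  rw [Finset.sum_filter]
  refine Finset.sum_congr rfl fun d hd => ?_
  symm
  have hd0 : d ≠ 0 := (Nat.pos_of_mem_divisors hd).ne'
  have hdN : d ∣ N := (Nat.mem_divisors.1 hd).1
  have hdNf : d.factorization ≤ N.factorization :=
    (Nat.factorization_le_iff_dvd hd0 hNne).2 hdN
  set S : Finset ℕ := n.primeFactors.filter
    (fun p => d.factorization p < n.factorization p) with hS
  -- characterize divisibility
  have hchar : ∀ ρ ∈ n.primeFactors.powerset, (d ∣ nrho N n ρ ↔ ρ ⊆ S) := by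
    intro ρ hρ
    rw [Finset.mem_powerset] at hρ
    rw [← Nat.factorization_le_iff_dvd hd0 (hpos ρ)]
    constructor
    · intro h p hp
      have hpn : p ∈ n.primeFactors := hρ hp
      have hposn : 0 < n.factorization p :=
        (Nat.prime_of_mem_primeFactors hpn).factorization_pos_of_dvd hn0.ne'
          (Nat.dvd_of_mem_primeFactors hpn)
      have := h p
      rw [hfact] at this
      rw [if_pos (Nat.primeFactors_mono hn hNne hpn), if_pos hp] at this
      exact Finset.mem_filter.2 ⟨hpn, lt_of_le_of_lt this (Nat.sub_lt hposn one_pos)⟩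
    · intro h q
      rw [hfact]
      split_ifs with h1 h2
      · have := (Finset.mem_filter.1 (h h2)).2
        omega
      · exact hdNf q
      · by_contra hc
        push_neg at hc
        have hq : q ∈ d.factorization.support := Finsupp.mem_support_iff.2 (by omega)
        rw [Nat.support_factorization] at hq
        exact h1 (Nat.primeFactors_mono hdN hNne hq)
  -- collapse the sum over ρ
  calc (∑ ρ ∈ n.primeFactors.powerset,
        (-1 : ℤ) ^ ρ.card • if d ∣ nrho N n ρ then f d else 0)
      = ∑ ρ ∈ n.primeFactors.powerset,
        (-1 : ℤ) ^ ρ.card • if ρ ⊆ S then f d else 0 := by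
        refine Finset.sum_congr rfl fun ρ hρ => ?_
        exact congrArg _ (if_congr (hchar ρ hρ) rfl rfl)
    _ = ∑ ρ ∈ n.primeFactors.powerset,
        if ρ ⊆ S then (-1 : ℤ) ^ ρ.card • f d else 0 := by
        refine Finset.sum_congr rfl fun ρ _ => ?_
        split_ifs <;> simp
    _ = ∑ ρ ∈ (n.primeFactors.powerset).filter (· ⊆ S), (-1 : ℤ) ^ ρ.card • f d := by
        rw [Finset.sum_filter]
    _ = ∑ ρ ∈ S.powerset, (-1 : ℤ) ^ ρ.card • f d := by
        congr 1
        ext ρ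
        simp only [Finset.mem_filter, Finset.mem_powerset]
        constructor
        · exact fun h => h.2
        · exact fun h => ⟨h.trans (Finset.filter_subset _ _), h⟩
    _ = (∑ ρ ∈ S.powerset, (-1 : ℤ) ^ ρ.card) • f d := by
        rw [Finset.sum_smul]
    _ = (if S = ∅ then (1 : ℤ) else 0) • f d := by
        rw [Finset.sum_powerset_neg_one_pow_card]
    _ = if n ∣ d then f d else 0 := by
        have : S = ∅ ↔ n ∣ d := by
          rw [← Nat.factorization_le_iff_dvd hn0.ne' hd0]
          constructor
          · intro h q
            by_contra hc
            push_neg at hc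
            have hq : q ∈ n.factorization.support := Finsupp.mem_support_iff.2 (by omega)
            rw [Nat.support_factorization] at hq
            have : q ∈ S := Finset.mem_filter.2 ⟨hq, hc⟩
            simp [h] at this
          · intro h
            rw [Finset.eq_empty_iff_forall_notMem]
            intro p hp
            have := (Finset.mem_filter.1 hp).2
            exact absurd (h p) (by omega)
        simp only [this]
        split_ifs <;> simp
end

section
/- Let ζ be a root of unity of order dividing N, let n ∣ N, let ρ ⊆ π(n), and set n(ρ) = N_{ρ'}·n̲_ρ with n̲ = n/∏_{p∈π(n)} p. Then for any prime q dividing N: v_q(o(ζ^{n(ρ)})) = 0 if q ∉ ρ; v_q(o(ζ^{n(ρ)})) = 0 if q ∈ ρ and v_q(o(ζ)) < v_q(n); and v_q(o(ζ^{n(ρ)})) = v_q(o(ζ)) − v_q(n) + 1 if q ∈ ρ and v_q(o(ζ)) ≥ v_q(n). -/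
theorem nrho_pos (N n : ℕ) (ρ : Finset ℕ) : 0 < nrho N n ρ :=
  Finset.prod_pos fun p hp => pow_pos (Nat.prime_of_mem_primeFactors hp).pos _

theorem nrho_factorization (N n : ℕ) (ρ : Finset ℕ) (q : ℕ) (hq : q.Prime)
    (hqN : q ∈ N.primeFactors) :
    (nrho N n ρ).factorization q =
      (if q ∈ ρ then n.factorization q - 1 else N.factorization q) := by
  unfold nrho
  rw [Nat.factorization_prod (fun p hp => (pow_pos (Nat.prime_of_mem_primeFactors hp).pos _).ne')]
  rw [Finsupp.finset_sum_apply]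
  rw [Finset.sum_eq_single q]
  · rw [(Nat.prime_of_mem_primeFactors hqN).factorization_pow, Finsupp.single_eq_same]
  · intro p hp hpq
    rw [(Nat.prime_of_mem_primeFactors hp).factorization_pow, Finsupp.single_eq_of_ne hpq.symm]
  · intro h; exact absurd hqN h

theorem stmt_7 (N n : ℕ) (hN : 0 < N) (hn : n ∣ N) (hn0 : 0 < n)
    (ρ : Finset ℕ) (hρ : ρ ⊆ n.primeFactors)
    (ζ : ℂ) (hζ : ζ ^ N = 1)
    (q : ℕ) (hq : q.Prime) (hqN : q ∣ N) :
    (q ∉ ρ → (orderOf (ζ ^ nrho N n ρ)).factorization q = 0) ∧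
    (q ∈ ρ → (orderOf ζ).factorization q < n.factorization q →
      (orderOf (ζ ^ nrho N n ρ)).factorization q = 0) ∧
    (q ∈ ρ → n.factorization q ≤ (orderOf ζ).factorization q →
      (orderOf (ζ ^ nrho N n ρ)).factorization q =
        (orderOf ζ).factorization q - n.factorization q + 1) := by
  have hfin : IsOfFinOrder ζ := isOfFinOrder_iff_pow_eq_one.mpr ⟨N, hN, hζ⟩
  set d := orderOf ζ with hd
  have hd0 : 0 < d := hfin.orderOf_pos
  have hdN : d ∣ N := orderOf_dvd_of_pow_eq_one hζ
  set m := nrho N n ρ with hm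
  have hm0 : 0 < m := nrho_pos N n ρ
  have hqNf : q ∈ N.primeFactors := Nat.mem_primeFactors.mpr ⟨hq, hqN, hN.ne'⟩
  have horder : orderOf (ζ ^ m) = d / Nat.gcd d m := IsOfFinOrder.orderOf_pow ζ m hfin
  have hgcd_dvd : Nat.gcd d m ∣ d := Nat.gcd_dvd_left d m
  have hfac : (orderOf (ζ ^ m)).factorization q =
      d.factorization q - min (d.factorization q) (m.factorization q) := by
    rw [horder, Nat.factorization_div hgcd_dvd, Finsupp.coe_tsub, Pi.sub_apply,
      Nat.factorization_gcd hd0.ne' hm0.ne', Finsupp.inf_apply]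
  have hmfac := nrho_factorization N n ρ q hq hqNf
  have hdle : d.factorization q ≤ N.factorization q :=
    (Nat.factorization_le_iff_dvd hd0.ne' hN.ne').mpr hdN q
  refine ⟨?_, ?_, ?_⟩
  · intro hq_notin
    rw [hfac, hmfac, if_neg hq_notin, min_eq_left hdle, Nat.sub_self]
  · intro hq_in hlt
    rw [hfac, hmfac, if_pos hq_in, min_eq_left (Nat.le_sub_one_of_lt hlt), Nat.sub_self]
  · intro hq_in hle
    have hn1 : 1 ≤ n.factorization q := by
      have := hρ hq_in
      rw [Nat.mem_primeFactors] at this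
      have := Nat.Prime.factorization_pos_of_dvd hq hn0.ne' this.2.1
      omega
    rw [hfac, hmfac, if_pos hq_in, min_eq_right (by omega)]
    omega
end

section
/- Let G be a finite group, χ the character of a representation 𝒳 : G → GL_d(ℂ), and n a positive integer. There exist a subgroup H ≤ G and a one-dimensional character φ of H with ⟨χ|_H, φ⟩ > 0 and n ∣ o(φ) if and only if there exist x ∈ G and an eigenvalue ζ of 𝒳(x) with n = o(ζ). -/
open LinearMap Module

set_option linter.unusedSectionVars false

namespace Stmt11Aux

variable {G : Type} [Group G] [Fintype G]

noncomputable def P (V : FDRep ℂ G) (H : Subgroup G) [Fintype H] (φ : H →* ℂˣ) :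
    Module.End ℂ V :=
  (Nat.card H : ℂ)⁻¹ • ∑ h : H, (((φ h)⁻¹ : ℂˣ) : ℂ) • V.ρ (h : G)

lemma trace_P (V : FDRep ℂ G) (H : Subgroup G) [Fintype H] (φ : H →* ℂˣ) :
    LinearMap.trace ℂ V (P V H φ)
      = (Nat.card H : ℂ)⁻¹ * ∑ h : H, V.character (h : G) * (((φ h)⁻¹ : ℂˣ) : ℂ) := by
  rw [P, map_smul, map_sum, smul_eq_mul]
  congr 1
  refine Finset.sum_congr rfl fun h _ => ?_
  rw [LinearMap.map_smul, FDRep.character, smul_eq_mul, mul_comm]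

lemma rho_mul_P (V : FDRep ℂ G) (H : Subgroup G) [Fintype H] (φ : H →* ℂˣ) (g : H) :
    V.ρ (g : G) * P V H φ = ((φ g : ℂˣ) : ℂ) • P V H φ := by
  simp only [P, smul_smul, Finset.mul_sum, mul_smul_comm]
  rw [mul_smul, smul_comm ((φ g : ℂˣ) : ℂ) ((Nat.card ↥H : ℂ)⁻¹)]
  refine congrArg _ ?_
  rw [Finset.smul_sum]
  refine Fintype.sum_equiv (Equiv.mulLeft g) _ _ (fun h => ?_)
  have h1 : V.ρ (g : G) * V.ρ (h : G) = V.ρ (((Equiv.mulLeft g h : H) : G)) := by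
    rw [← map_mul]; rfl
  rw [h1, smul_smul]
  congr 1
  simp only [Equiv.coe_mulLeft, map_mul, mul_inv_rev, Units.val_mul, Units.val_inv_eq_inv_val]
  rw [mul_left_comm, mul_inv_cancel₀ (Units.ne_zero _), mul_one]


lemma P_mul_P (V : FDRep ℂ G) (H : Subgroup G) [Fintype H] (φ : H →* ℂˣ) :
    P V H φ * P V H φ = P V H φ := by
  have hcard : (Nat.card H : ℂ) ≠ 0 := by
    exact_mod_cast (Nat.card_pos (α := H)).ne'
  nth_rewrite 1 [P]
  rw [smul_mul_assoc, Finset.sum_mul]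
  have key : ∀ h : H, (((φ h)⁻¹ : ℂˣ) : ℂ) • V.ρ (h : G) * P V H φ = P V H φ := by
    intro h
    rw [smul_mul_assoc, rho_mul_P, smul_smul, ← Units.val_mul, inv_mul_cancel, Units.val_one,
      one_smul]
  simp only [key, Finset.sum_const, Finset.card_univ, ← Nat.card_eq_fintype_card]
  rw [← Nat.cast_smul_eq_nsmul ℂ, smul_smul, inv_mul_cancel₀ hcard, one_smul]

lemma P_fixed (V : FDRep ℂ G) (H : Subgroup G) [Fintype H] (φ : H →* ℂˣ) (v : V)
    (hv : ∀ h : H, V.ρ (h : G) v = ((φ h : ℂˣ) : ℂ) • v) : P V H φ v = v := by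
  have hcard : (Nat.card H : ℂ) ≠ 0 := by
    exact_mod_cast (Nat.card_pos (α := H)).ne'
  rw [P, LinearMap.smul_apply, LinearMap.sum_apply]
  have key : ∀ h : H, ((((φ h)⁻¹ : ℂˣ) : ℂ) • V.ρ (h : G)) v = v := by
    intro h
    rw [LinearMap.smul_apply, hv h, smul_smul, ← Units.val_mul, inv_mul_cancel, Units.val_one,
      one_smul]
  simp only [key, Finset.sum_const, Finset.card_univ, ← Nat.card_eq_fintype_card]
  rw [← Nat.cast_smul_eq_nsmul ℂ, smul_smul, inv_mul_cancel₀ hcard, one_smul]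

lemma eigen_of_P (V : FDRep ℂ G) (H : Subgroup G) [Fintype H] (φ : H →* ℂˣ) (w : V) (h : H) :
    V.ρ (h : G) (P V H φ w) = ((φ h : ℂˣ) : ℂ) • P V H φ w := by
  have := congrArg (fun f : Module.End ℂ V => f w) (rho_mul_P V H φ h)
  simpa using this

end Stmt11Aux

open Stmt11Aux in
theorem stmt_11 (G : Type) [Group G] [Fintype G] (V : FDRep ℂ G) (n : ℕ) (hn : 0 < n) :
    (∃ (H : Subgroup G) (φ : H →* ℂˣ),
        (∃ m : ℕ, 0 < m ∧
          (Nat.card H : ℂ)⁻¹ * ∑ᶠ h : H, V.character (h : G) * ((φ h)⁻¹ : ℂˣ) = (m : ℂ)) ∧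
        n ∣ orderOf φ) ↔
      ∃ (x : G) (ζ : ℂ), Module.End.HasEigenvalue (V.ρ x) ζ ∧ n = orderOf ζ := by
  constructor
  · rintro ⟨H, φ, ⟨m, hm, hsum⟩, hdvd⟩
    haveI : Fintype H := Fintype.ofFinite H
    rw [finsum_eq_sum_of_fintype] at hsum
    have htr : LinearMap.trace ℂ V (P V H φ) = (m : ℂ) := by
      rw [trace_P]; exact hsum
    have hPne : P V H φ ≠ 0 := by
      intro h0
      rw [h0, map_zero] at htr
      exact hm.ne' (by exact_mod_cast htr.symm)
    obtain ⟨w, hw⟩ : ∃ w : V, P V H φ w ≠ 0 := by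
      by_contra hcon
      push_neg at hcon
      exact hPne (LinearMap.ext fun w => by simpa using hcon w)
    have heig : ∀ h : H, V.ρ (h : G) (P V H φ w) = ((φ h : ℂˣ) : ℂ) • (P V H φ w) :=
      fun h => eigen_of_P V H φ w h
    have hfin : orderOf φ ≠ 0 := by
      have hpow : φ ^ Fintype.card H = 1 := by
        ext h
        rw [MonoidHom.pow_apply, ← map_pow, pow_card_eq_one, map_one, MonoidHom.one_apply]
      exact (orderOf_pos_iff.mpr
        (isOfFinOrder_iff_pow_eq_one.mpr ⟨_, Fintype.card_pos, hpow⟩)).ne'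
    haveI : Finite φ.range := by
      have : Finite (Set.range φ) := Set.finite_range φ
      exact this
    obtain ⟨g, hg⟩ := IsCyclic.exists_generator (α := φ.range)
    obtain ⟨h₀, hh₀⟩ := φ.rangeRestrict_surjective g
    have hφh₀ : φ h₀ = (g : ℂˣ) := by rw [← hh₀]; rfl
    have hdvd1 : orderOf φ ∣ orderOf (φ h₀) := by
      apply orderOf_dvd_of_pow_eq_one
      ext h
      obtain ⟨k, hk⟩ := hg ⟨φ h, ⟨h, rfl⟩⟩
      have hφh : φ h = (φ h₀) ^ k := by
        rw [hφh₀]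
        have := congrArg (Subtype.val : φ.range → ℂˣ) hk
        simpa using this.symm
      rw [MonoidHom.pow_apply, hφh, ← zpow_natCast, ← zpow_mul, mul_comm, zpow_mul,
        zpow_natCast, pow_orderOf_eq_one, one_zpow, MonoidHom.one_apply]
    have hdvd2 : orderOf (φ h₀) ∣ orderOf φ := by
      apply orderOf_dvd_of_pow_eq_one
      rw [← MonoidHom.pow_apply, pow_orderOf_eq_one, MonoidHom.one_apply]
    have ho : orderOf (φ h₀) = orderOf φ := Nat.dvd_antisymm hdvd2 hdvd1
    have hdivne : orderOf φ / n ≠ 0 :=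
      (Nat.div_pos (Nat.le_of_dvd (Nat.pos_of_ne_zero hfin) hdvd) hn).ne'
    refine ⟨((h₀ ^ (orderOf φ / n) : H) : G), ((φ (h₀ ^ (orderOf φ / n)) : ℂˣ) : ℂ), ?_, ?_⟩
    · exact Module.End.hasEigenvalue_of_hasEigenvector
        ⟨Module.End.mem_eigenspace_iff.mpr (heig _), hw⟩
    · rw [orderOf_units, map_pow, orderOf_pow' _ hdivne, ho,
        Nat.gcd_eq_right (Nat.div_dvd_of_dvd hdvd), Nat.div_div_self hdvd hfin]
  · rintro ⟨x, ζ, hev, hnζ⟩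
    obtain ⟨v, hv⟩ := hev.exists_hasEigenvector
    have hζd : ζ ^ orderOf x = 1 := by
      have h1 : ((V.ρ x) ^ orderOf x) v = ζ ^ orderOf x • v :=
        Module.End.HasEigenvector.pow_apply hv (orderOf x)
      rw [← map_pow, pow_orderOf_eq_one, map_one, Module.End.one_apply] at h1
      have h2 : (ζ ^ orderOf x - 1) • v = 0 := by
        rw [sub_smul, one_smul, ← h1, sub_self]
      rcases smul_eq_zero.mp h2 with h | h
      · exact sub_eq_zero.mp h
      · exact absurd h hv.2
    have hζ0 : ζ ≠ 0 := by
      intro h0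
      rw [h0, zero_pow (orderOf_pos x).ne'] at hζd
      exact zero_ne_one hζd
    set u : ℂˣ := Units.mk0 ζ hζ0 with hu
    have hud : u ^ orderOf x = 1 := by
      ext
      rw [Units.val_pow_eq_pow_val, Units.val_one]
      exact hζd
    set H : Subgroup G := Subgroup.zpowers x with hH
    haveI : Fintype H := Fintype.ofFinite H
    have hex : ∀ h : H, ∃ k : ℕ, x ^ k = (h : G) := fun h => by
      obtain ⟨k, hk⟩ := mem_powers_iff_mem_zpowers.mpr h.2
      exact ⟨k, hk⟩
    choose c hc using hex
    have hupow : ∀ a b : ℕ, x ^ a = x ^ b → u ^ a = u ^ b := fun a b hab => by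
      rw [pow_eq_pow_iff_modEq] at hab ⊢
      exact hab.of_dvd (orderOf_dvd_of_pow_eq_one hud)
    set φ : H →* ℂˣ := MonoidHom.mk' (fun h => u ^ c h) (fun h1 h2 => by
      have hkey : x ^ c (h1 * h2) = x ^ (c h1 + c h2) := by
        rw [pow_add, hc, hc, hc]; rfl
      show u ^ c (h1 * h2) = u ^ c h1 * u ^ c h2
      rw [hupow _ _ hkey, pow_add]) with hφdef
    have hφval : ∀ h : H, φ h = u ^ c h := fun _ => rfl
    have hφX : φ ⟨x, Subgroup.mem_zpowers x⟩ = u := by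
      have h1 : u ^ c ⟨x, Subgroup.mem_zpowers x⟩ = u ^ 1 :=
        hupow _ _ (by rw [pow_one]; exact hc _)
      rw [hφval, h1, pow_one]
    have heig : ∀ h : H, V.ρ (h : G) v = ((φ h : ℂˣ) : ℂ) • v := fun h => by
      have h1 : V.ρ (h : G) = (V.ρ x) ^ (c h) := by rw [← hc h, map_pow]
      rw [h1, Module.End.HasEigenvector.pow_apply hv]
      rw [hφval, Units.val_pow_eq_pow_val]
      rfl
    have hPv : P V H φ v = v := P_fixed V H φ v heig
    obtain ⟨p, hp⟩ := (LinearMap.isProj_iff_isIdempotentElem (P V H φ)).mpr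
      (by exact P_mul_P V H φ)
    have hvp : v ∈ p := by have := hp.map_mem v; rwa [hPv] at this
    have hvne : (⟨v, hvp⟩ : p) ≠ 0 := fun h0 => hv.2 (congrArg Subtype.val h0)
    haveI : Nontrivial p := nontrivial_of_ne _ _ hvne
    refine ⟨H, φ, ⟨Module.finrank ℂ p, Module.finrank_pos, ?_⟩, ?_⟩
    · rw [finsum_eq_sum_of_fintype, ← trace_P V H φ]
      exact hp.trace
    · have h1 : orderOf φ ∣ orderOf u := by
        apply orderOf_dvd_of_pow_eq_one
        ext h
        rw [MonoidHom.pow_apply, hφval, ← pow_mul, mul_comm, pow_mul, pow_orderOf_eq_one,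
          one_pow, MonoidHom.one_apply]
      have h2 : orderOf u ∣ orderOf φ := by
        apply orderOf_dvd_of_pow_eq_one
        rw [← hφX, ← MonoidHom.pow_apply, pow_orderOf_eq_one, MonoidHom.one_apply]
      have hζu : orderOf ζ = orderOf u := by
        rw [← orderOf_units, hu, Units.val_mk0]
      rw [hnζ, hζu]
      exact h2
end

section
/- Let G be a finite group, χ the character of a representation 𝒳, and n a positive integer. If some subgroup H ≤ G has a linear constituent φ of χ|_H with n ∣ o(φ), then there exists a cyclic subgroup K ≤ G and a linear constituent ψ of χ|_K with o(ψ) = n. -/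
open Module Representation

noncomputable def twist {G : Type} [Group G] (V : FDRep ℂ G) {S : Type} [Group S]
    (f : S →* G) (lam : S →* ℂˣ) : Representation ℂ S V where
  toFun s := (((lam s)⁻¹ : ℂˣ) : ℂ) • V.ρ (f s)
  map_one' := by simp
  map_mul' s t := by
    ext v
    simp only [map_mul, Module.End.mul_apply, LinearMap.smul_apply, map_smul, smul_smul,
      Units.val_mul, mul_inv]
    rw [mul_comm]

lemma twist_char {G : Type} [Group G] (V : FDRep ℂ G) {S : Type} [Group S]
    (f : S →* G) (lam : S →* ℂˣ) (s : S) :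
    (FDRep.of (twist V f lam)).character s = V.character (f s) * (((lam s)⁻¹ : ℂˣ) : ℂ) := by
  show LinearMap.trace ℂ _ ((((lam s)⁻¹ : ℂˣ) : ℂ) • V.ρ (f s)) = _
  rw [map_smul]
  simp [FDRep.character, smul_eq_mul, mul_comm]

lemma avg_eq {G : Type} [Group G] (V : FDRep ℂ G) {S : Type} [Group S] [Fintype S]
    (f : S →* G) (lam : S →* ℂˣ) :
    (Nat.card S : ℂ)⁻¹ * ∑ᶠ s : S, V.character (f s) * (((lam s)⁻¹ : ℂˣ) : ℂ) =
      (finrank ℂ (invariants (twist V f lam)) : ℂ) := by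
  have hcard : ((Fintype.card S : ℂ)) ≠ 0 := by
    exact_mod_cast Fintype.card_ne_zero
  have : Invertible ((Fintype.card S : ℂ)) := invertibleOfNonzero hcard
  have h := FDRep.average_char_eq_finrank_invariants (FDRep.of (twist V f lam))
  rw [finsum_eq_sum_of_fintype]
  have hchar : ∀ s : S, V.character (f s) * (((lam s)⁻¹ : ℂˣ) : ℂ)
      = (FDRep.of (twist V f lam)).character s := fun s => (twist_char V f lam s).symm
  simp_rw [hchar]
  rw [Nat.card_eq_fintype_card]
  rw [Nat.card_eq_fintype_card] at h
  exact h

lemma invariants_mono {G : Type} [Group G] (V : FDRep ℂ G) {H K : Subgroup G}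
    (hKH : K ≤ H) (φ : H →* ℂˣ) :
    invariants (twist V H.subtype φ) ≤
      invariants (twist V K.subtype (φ.comp (Subgroup.inclusion hKH))) := by
  intro v hv x
  exact hv (Subgroup.inclusion hKH x)

lemma orderOf_hom_eq {S : Type} [Group S] (b : S) (hb : ∀ x : S, ∃ m : ℤ, x = b ^ m)
    (χ : S →* ℂˣ) : orderOf χ = orderOf (χ b) := by
  rw [orderOf_eq_orderOf_iff]
  intro k
  constructor
  · intro hk
    have := congrArg (fun ξ : S →* ℂˣ => ξ b) hk
    simpa using this
  · intro hk
    refine MonoidHom.ext fun x => ?_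
    obtain ⟨m, rfl⟩ := hb x
    show (χ ^ k) (b ^ m) = (1 : ℂˣ)
    rw [MonoidHom.pow_apply, map_zpow, ← zpow_natCast, ← zpow_mul, mul_comm, zpow_mul,
      zpow_natCast, hk, one_zpow]

theorem stmt_12 (G : Type) [Group G] [Fintype G] (V : FDRep ℂ G) (n : ℕ) (hn : 0 < n)
    (H : Subgroup G) (φ : H →* ℂˣ)
    (hconst : ∃ m : ℕ, 0 < m ∧
      (Nat.card H : ℂ)⁻¹ * ∑ᶠ h : H, V.character (h : G) * ((φ h)⁻¹ : ℂˣ) = (m : ℂ))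
    (hord : n ∣ orderOf φ) :
    ∃ (K : Subgroup G) (ψ : K →* ℂˣ), IsCyclic K ∧
      (∃ m : ℕ, 0 < m ∧
        (Nat.card K : ℂ)⁻¹ * ∑ᶠ x : K, V.character (x : G) * ((ψ x)⁻¹ : ℂˣ) = (m : ℂ)) ∧
      orderOf ψ = n := by
  classical
  have : Fintype H := Fintype.ofFinite _
  obtain ⟨m, hm, hsum⟩ := hconst
  -- φ has finite order
  have hfin : φ ^ Fintype.card H = 1 := by
    ext h
    simp [MonoidHom.pow_apply, ← map_pow, pow_card_eq_one]
  have hofin : IsOfFinOrder φ :=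
    isOfFinOrder_iff_pow_eq_one.mpr ⟨Fintype.card H, Fintype.card_pos, hfin⟩
  have ho : orderOf φ ≠ 0 := hofin.orderOf_pos.ne'
  -- find h with orderOf (φ h) = orderOf φ
  have hrfin : Finite φ.range := by
    have := Set.finite_range φ
    exact Set.Finite.to_subtype (by simpa using this)
  obtain ⟨g, hg⟩ := (subgroup_units_cyclic φ.range).exists_generator
  obtain ⟨h, hh⟩ := g.2
  have horder : orderOf (φ h) = orderOf φ := by
    apply Nat.dvd_antisymm
    · apply orderOf_dvd_of_pow_eq_one
      have := congrArg (fun ξ : H →* ℂˣ => ξ h) (pow_orderOf_eq_one φ)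
      exact (MonoidHom.pow_apply φ _ h).symm.trans this
    · apply orderOf_dvd_of_pow_eq_one
      have hog : orderOf (φ h) = orderOf g := by
        rw [hh]
        exact orderOf_injective φ.range.subtype (Subgroup.subtype_injective _) g
      refine MonoidHom.ext fun x => ?_
      have hx : (⟨φ x, ⟨x, rfl⟩⟩ : φ.range) ∈ Subgroup.zpowers g := hg _
      obtain ⟨mm, hmm⟩ := hx
      have hφx : φ x = ((g ^ mm : φ.range) : ℂˣ) := by
        simpa using congrArg Subtype.val hmm.symm
      have h1 : (g ^ mm) ^ orderOf (φ h) = 1 := by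
        rw [hog, ← zpow_natCast, ← zpow_mul, mul_comm, zpow_mul, zpow_natCast,
          pow_orderOf_eq_one, one_zpow]
      show (φ ^ orderOf (φ h)) x = (1 : ℂˣ)
      rw [MonoidHom.pow_apply, hφx]
      simpa using congrArg Subtype.val h1
  set o := orderOf φ with ho_def
  set d := o / n with hd_def
  have hdn : d * n = o := Nat.div_mul_cancel hord
  set g0 : G := (↑h : G) ^ d with hg0
  have hg0H : g0 ∈ H := pow_mem h.2 d
  set K := Subgroup.zpowers g0 with hK
  have hKH : K ≤ H := by
    intro x hx
    obtain ⟨mm, rfl⟩ := hx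
    exact zpow_mem hg0H mm
  set ψ := φ.comp (Subgroup.inclusion hKH) with hψ
  set b : K := ⟨g0, Subgroup.mem_zpowers g0⟩ with hb_def
  have hb : ∀ x : K, ∃ mm : ℤ, x = b ^ mm := by
    rintro ⟨x, hx⟩
    obtain ⟨mm, hmg⟩ := hx
    exact ⟨mm, by apply Subtype.ext; simpa using hmg.symm⟩
  have hcyc : IsCyclic K := by
    refine ⟨⟨b, fun x => ?_⟩⟩
    obtain ⟨mm, rfl⟩ := hb x
    exact Subgroup.zpow_mem _ (Subgroup.mem_zpowers b) mm
  have hψb : ψ b = φ h ^ d := by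
    have hbe : Subgroup.inclusion hKH b = h ^ d := by
      apply Subtype.ext
      simp [hb_def, hg0]
    show φ (Subgroup.inclusion hKH b) = _
    rw [hbe, map_pow]
  have hordψ : orderOf ψ = n := by
    rw [orderOf_hom_eq b hb ψ, hψb]
    have : d = orderOf (φ h) / n := by rw [horder]
    rw [this]
    exact orderOf_pow_orderOf_div (by rw [horder]; exact ho) (by rw [horder]; exact hord)
  -- multiplicity
  have : Fintype K := Fintype.ofFinite _
  have hH := avg_eq V H.subtype φ
  have hH' : (Nat.card H : ℂ)⁻¹ * ∑ᶠ h : H, V.character (h : G) * ((φ h)⁻¹ : ℂˣ) =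
      (finrank ℂ (invariants (twist V H.subtype φ)) : ℂ) := by
    simpa [Subgroup.coe_subtype] using hH
  have hmH : finrank ℂ (invariants (twist V H.subtype φ)) = m := by
    have := hsum.symm.trans hH'
    exact_mod_cast this.symm
  have hle : finrank ℂ (invariants (twist V H.subtype φ)) ≤
      finrank ℂ (invariants (twist V K.subtype ψ)) :=
    Submodule.finrank_mono (invariants_mono V hKH φ)
  have hK' : (Nat.card K : ℂ)⁻¹ * ∑ᶠ x : K, V.character (x : G) * ((ψ x)⁻¹ : ℂˣ) =
      (finrank ℂ (invariants (twist V K.subtype ψ)) : ℂ) := by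
    simpa [Subgroup.coe_subtype] using avg_eq V K.subtype ψ
  have hpos : 0 < finrank ℂ (invariants (twist V K.subtype ψ)) := by
    have h2 := hle
    rw [hmH] at h2
    exact lt_of_lt_of_le hm h2
  exact ⟨K, ψ, hcyc, ⟨finrank ℂ (invariants (twist V K.subtype ψ)), hpos, hK'⟩, hordψ⟩
end

section
/- Let G be a finite group with regular character χ_reg, and let n be a positive divisor of exp(G). Then ∑_{ρ ⊆ π(n)} (−1)^{|ρ|} ⟨Ψ^{n(ρ)}(χ_reg), 1_G⟩ = |{g ∈ G : n ∣ o(g)}|, the number of elements of G whose order is a multiple of n. In particular this quantity is positive if and only if G has an element of order n. -/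
lemma nrho_ne_zero (N n : ℕ) (ρ : Finset ℕ) : nrho N n ρ ≠ 0 := by
  unfold nrho
  refine Finset.prod_ne_zero_iff.mpr fun p hp => ?_
  exact pow_ne_zero _ (Nat.prime_of_mem_primeFactors hp).ne_zero

lemma nrho_fact (N n : ℕ) (ρ : Finset ℕ) (q : ℕ) :
    (nrho N n ρ).factorization q =
      if q ∈ N.primeFactors then
        (if q ∈ ρ then n.factorization q - 1 else N.factorization q) else 0 := by
  unfold nrho
  rw [Nat.factorization_prod (fun p hp => pow_ne_zero _ (Nat.prime_of_mem_primeFactors hp).ne_zero)]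
  rw [Finset.sum_apply']
  have : ∀ p ∈ N.primeFactors,
      ((p ^ (if p ∈ ρ then n.factorization p - 1 else N.factorization p)).factorization) q =
      if p = q then (if p ∈ ρ then n.factorization p - 1 else N.factorization p) else 0 := by
    intro p hp
    rw [Nat.Prime.factorization_pow (Nat.prime_of_mem_primeFactors hp), Finsupp.single_apply]
  rw [Finset.sum_congr rfl this, Finset.sum_ite_eq' N.primeFactors q
    (fun p => if p ∈ ρ then n.factorization p - 1 else N.factorization p)]

lemma dvd_nrho_iff {N n m : ℕ} (hN : N ≠ 0) (hn : n ∣ N) (hn0 : n ≠ 0)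
    (hm : m ∣ N) (hm0 : m ≠ 0) {ρ : Finset ℕ} (hρ : ρ ⊆ n.primeFactors) :
    m ∣ nrho N n ρ ↔ ∀ q ∈ ρ, ¬ q ^ n.factorization q ∣ m := by
  rw [← Nat.factorization_le_iff_dvd hm0 (nrho_ne_zero N n ρ), Finsupp.le_def]
  constructor
  · intro h q hq
    have hqn := hρ hq
    have hqp := Nat.prime_of_mem_primeFactors hqn
    rw [hqp.pow_dvd_iff_le_factorization hm0]
    have := h q
    rw [nrho_fact, if_pos (Nat.primeFactors_mono hn hN hqn), if_pos hq] at this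
    have h1 : 1 ≤ n.factorization q := (Nat.Prime.factorization_pos_of_dvd hqp hn0
      (Nat.dvd_of_mem_primeFactors hqn))
    omega
  · intro h q
    rw [nrho_fact]
    by_cases hqN : q ∈ N.primeFactors
    · rw [if_pos hqN]
      by_cases hqρ : q ∈ ρ
      · rw [if_pos hqρ]
        have hqp := Nat.prime_of_mem_primeFactors (hρ hqρ)
        have := h q hqρ
        rw [hqp.pow_dvd_iff_le_factorization hm0] at this
        omega
      · rw [if_neg hqρ]
        exact (Nat.factorization_le_iff_dvd hm0 hN).mpr hm q
    · rw [if_neg hqN]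
      have := (Nat.factorization_le_iff_dvd hm0 hN).mpr hm q
      have hz : N.factorization q = 0 := by
        rwa [← Finsupp.notMem_support_iff, Nat.support_factorization]
      omega

lemma n_dvd_iff {n m : ℕ} (hn0 : n ≠ 0) (hm0 : m ≠ 0) :
    n ∣ m ↔ ∀ q ∈ n.primeFactors, q ^ n.factorization q ∣ m := by
  constructor
  · intro h q hq
    exact (Nat.ordProj_dvd n q).trans h
  · intro h
    rw [← Nat.factorization_le_iff_dvd hn0 hm0, Finsupp.le_def]
    intro q
    by_cases hq : q ∈ n.primeFactors
    · exact ((Nat.prime_of_mem_primeFactors hq).pow_dvd_iff_le_factorization hm0).mp (h q hq)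
    · have : n.factorization q = 0 := by
        rwa [← Finsupp.notMem_support_iff, Nat.support_factorization]
      omega

/-- The character of the regular representation of `G`. -/
noncomputable def regChar (G : Type) [Group G] [Fintype G] [DecidableEq G] (g : G) : ℂ :=
  if g = 1 then (Fintype.card G : ℂ) else 0

theorem stmt_15 (G : Type) [Group G] [Fintype G] [DecidableEq G]
    (n : ℕ) (hn0 : 0 < n) (hn : n ∣ Monoid.exponent G) :
    (∑ ρ ∈ n.primeFactors.powerset, (-1 : ℂ) ^ ρ.card *
        ((Fintype.card G : ℂ)⁻¹ *
          ∑ g : G, regChar G (g ^ nrho (Monoid.exponent G) n ρ))) =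
      ((Finset.univ.filter (fun g : G => n ∣ orderOf g)).card : ℂ) ∧
    (0 < (Finset.univ.filter (fun g : G => n ∣ orderOf g)).card ↔
      ∃ g : G, orderOf g = n) := by
  classical
  have hNe : Monoid.exponent G ≠ 0 := Monoid.exponent_ne_zero_of_finite
  have hcard : (Fintype.card G : ℂ) ≠ 0 := Nat.cast_ne_zero.mpr Fintype.card_ne_zero
  have hog : ∀ g : G, orderOf g ∣ Monoid.exponent G := fun g => Monoid.order_dvd_exponent g
  have hog0 : ∀ g : G, orderOf g ≠ 0 := fun g => (orderOf_pos g).ne'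
  constructor
  · have hkey : ∀ m : ℕ, (Fintype.card G : ℂ)⁻¹ * ∑ g : G, regChar G (g ^ m)
        = ∑ g : G, (if orderOf g ∣ m then (1 : ℂ) else 0) := by
      intro m
      have h1 : ∀ g : G, regChar G (g ^ m)
          = (Fintype.card G : ℂ) * (if orderOf g ∣ m then 1 else 0) := by
        intro g
        simp only [regChar, ← orderOf_dvd_iff_pow_eq_one]
        split_ifs <;> simp
      rw [Finset.sum_congr rfl (fun g _ => h1 g), ← Finset.mul_sum, inv_mul_cancel_left₀ hcard]
    calc ∑ ρ ∈ n.primeFactors.powerset, (-1 : ℂ) ^ ρ.card *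
          ((Fintype.card G : ℂ)⁻¹ * ∑ g : G, regChar G (g ^ nrho (Monoid.exponent G) n ρ))
        = ∑ ρ ∈ n.primeFactors.powerset, ∑ g : G,
            (-1 : ℂ) ^ ρ.card * (if orderOf g ∣ nrho (Monoid.exponent G) n ρ then 1 else 0) := by
          refine Finset.sum_congr rfl fun ρ _ => ?_
          rw [hkey, Finset.mul_sum]
      _ = ∑ g : G, ∑ ρ ∈ n.primeFactors.powerset,
            (-1 : ℂ) ^ ρ.card * (if orderOf g ∣ nrho (Monoid.exponent G) n ρ then 1 else 0) :=
          Finset.sum_comm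
      _ = ∑ g : G, (if n ∣ orderOf g then (1 : ℂ) else 0) := by
          refine Finset.sum_congr rfl fun g _ => ?_
          have step1 : ∀ ρ ∈ n.primeFactors.powerset,
              (-1 : ℂ) ^ ρ.card * (if orderOf g ∣ nrho (Monoid.exponent G) n ρ then 1 else 0)
              = (∏ q ∈ ρ, -(if q ^ n.factorization q ∣ orderOf g then (0 : ℂ) else 1)) *
                ∏ q ∈ n.primeFactors \ ρ, (1 : ℂ) := by
            intro ρ hρ
            rw [Finset.mem_powerset] at hρ
            rw [Finset.prod_const_one, mul_one]
            have : (∏ q ∈ ρ, -(if q ^ n.factorization q ∣ orderOf g then (0 : ℂ) else 1))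
                = (-1 : ℂ) ^ ρ.card *
                  ∏ q ∈ ρ, (if ¬ q ^ n.factorization q ∣ orderOf g then (1 : ℂ) else 0) := by
              rw [← Finset.prod_const, ← Finset.prod_mul_distrib]
              refine Finset.prod_congr rfl fun q _ => ?_
              split_ifs <;> ring
            rw [this, Finset.prod_boole]
            congr 1
            exact if_congr (dvd_nrho_iff hNe hn hn0.ne' (hog g) (hog0 g) hρ) rfl rfl
          rw [Finset.sum_congr rfl step1, ← Finset.prod_add]
          have step2 : ∀ q ∈ n.primeFactors,
              (-(if q ^ n.factorization q ∣ orderOf g then (0 : ℂ) else 1) + 1)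
              = (if q ^ n.factorization q ∣ orderOf g then (1 : ℂ) else 0) := by
            intro q _
            split_ifs <;> ring
          rw [Finset.prod_congr rfl step2, Finset.prod_boole]
          exact if_congr (n_dvd_iff hn0.ne' (hog0 g)).symm rfl rfl
      _ = ((Finset.univ.filter (fun g : G => n ∣ orderOf g)).card : ℂ) := by
          rw [Finset.sum_boole]
  · rw [Finset.card_pos]
    constructor
    · rintro ⟨g, hg⟩
      rw [Finset.mem_filter] at hg
      exact ⟨g ^ (orderOf g / n), orderOf_pow_orderOf_div (hog0 g) hg.2⟩
    · rintro ⟨g, hg⟩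
      exact ⟨g, Finset.mem_filter.mpr ⟨Finset.mem_univ g, hg ▸ dvd_rfl⟩⟩
end
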